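/- arXiv:2404.04594 — 6 statements merged into one kernel-verified Lean document; each statement's English description precedes it below -/
import Mathlib

section
/- Let J ⊆ ℝ be a nontrivial interval, let I be a nonempty index set, and for each i ∈ I let a_i, b_i : [0,1] → ℝ be continuous functions with b_i(t) ≥ 0 for all t ∈ [0,1]. Define c : J → ℝ ∪ {−∞} by c(μ) = inf_{i ∈ I} max_{t ∈ [0,1]} ( a_i(t) − μ·b_i(t) ), and assume c(μ) > −∞ for every μ ∈ J. Then: (1) c is non-increasing on J; (2) c is continuous from the left at every μ ∈ J that is a limit from the left of points of J; (3) c is differentiable at almost every μ ∈ J. -/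
open Set MeasureTheory

noncomputable section

/-- for `c(μ) = inf_i max_{t∈[0,1]} (a_i(t) - μ·b_i(t))` with `a_i, b_i`
continuous and `b_i ≥ 0`, assuming `c(μ) > -∞` on a nontrivial interval `J`, the function
`c` is non-increasing on `J`, continuous from the left at every point of `J` which is a
left-limit of points of `J`, and differentiable (as a function on `J`) at almost every
`μ ∈ J`. -/
theorem statement5 {ι : Type*} [Nonempty ι] (J : Set ℝ) (hJ : J.OrdConnected)
    (hJnt : ∃ x ∈ J, ∃ y ∈ J, x < y)
    (a b : ι → ℝ → ℝ)
    (ha : ∀ i, ContinuousOn (a i) (Icc 0 1)) (hb : ∀ i, ContinuousOn (b i) (Icc 0 1))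
    (hbnn : ∀ i, ∀ t ∈ Icc (0 : ℝ) 1, 0 ≤ b i t)
    (c : ℝ → ℝ)
    (hc : ∀ μ, c μ = sInf (Set.range fun i => sSup ((fun t => a i t - μ * b i t) '' Icc 0 1)))
    (hfin : ∀ μ ∈ J, BddBelow (Set.range fun i => sSup ((fun t => a i t - μ * b i t) '' Icc 0 1))) :
    AntitoneOn c J ∧
    (∀ μ ∈ J, μ ∈ closure (J ∩ Iio μ) →
      Filter.Tendsto c (nhdsWithin μ (J ∩ Iio μ)) (nhds (c μ))) ∧
    (∀ᵐ μ ∂volume, μ ∈ J → ∃ d : ℝ, HasDerivWithinAt c d J μ) := by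
  set M : ι → ℝ → ℝ := fun i μ => sSup ((fun t => a i t - μ * b i t) '' Icc 0 1) with hM
  have hIcc : (Icc (0:ℝ) 1).Nonempty := ⟨0, by norm_num⟩
  have hcont : ∀ i (μ : ℝ), ContinuousOn (fun t => a i t - μ * b i t) (Icc 0 1) :=
    fun i μ => (ha i).sub (continuousOn_const.mul (hb i))
  have hbdd : ∀ i (μ : ℝ), BddAbove ((fun t => a i t - μ * b i t) '' Icc 0 1) :=
    fun i μ => (isCompact_Icc.image_of_continuousOn (hcont i μ)).bddAbove
  have hbB : ∀ i, BddAbove (b i '' Icc 0 1) :=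
    fun i => (isCompact_Icc.image_of_continuousOn (hb i)).bddAbove
  set B : ι → ℝ := fun i => sSup (b i '' Icc 0 1) with hB
  have hB0 : ∀ i, 0 ≤ B i := fun i =>
    le_trans (hbnn i 0 ⟨le_refl 0, by norm_num⟩)
      (le_csSup (hbB i) ⟨0, ⟨le_refl 0, by norm_num⟩, rfl⟩)
  have hMmono : ∀ i, ∀ μ ν : ℝ, μ ≤ ν → M i ν ≤ M i μ := by
    intro i μ ν hμν
    apply csSup_le (hIcc.image _)
    rintro x ⟨t, ht, rfl⟩
    dsimp only
    have h1 : a i t - μ * b i t ≤ M i μ := le_csSup (hbdd i μ) ⟨t, ht, rfl⟩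
    have := hbnn i t ht
    nlinarith
  have hMlip : ∀ i, ∀ μ ν : ℝ, ν ≤ μ → M i ν ≤ M i μ + (μ - ν) * B i := by
    intro i μ ν h
    apply csSup_le (hIcc.image _)
    rintro x ⟨t, ht, rfl⟩
    dsimp only
    have h1 : a i t - μ * b i t ≤ M i μ := le_csSup (hbdd i μ) ⟨t, ht, rfl⟩
    have h2 : b i t ≤ B i := le_csSup (hbB i) ⟨t, ht, rfl⟩
    nlinarith [hbnn i t ht]
  have hle : ∀ i, ∀ μ ∈ J, c μ ≤ M i μ := by
    intro i μ hμ
    rw [hc]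
    exact csInf_le (hfin μ hμ) ⟨i, rfl⟩
  have hanti : AntitoneOn c J := by
    intro μ hμ ν hν hμν
    rw [hc, hc, sInf_range, sInf_range]
    exact ciInf_mono (hfin ν hν) (fun i => hMmono i μ ν hμν)
  refine ⟨hanti, ?_, ?_⟩
  · intro μ hμ _
    rw [Metric.tendsto_nhdsWithin_nhds]
    intro ε hε
    have h1 : sInf (Set.range fun i => M i μ) < c μ + ε / 2 := by
      rw [← hc]; linarith
    obtain ⟨x, ⟨i, rfl⟩, hi⟩ := exists_lt_of_csInf_lt (Set.range_nonempty _) h1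
    refine ⟨ε / (2 * (B i + 1)), div_pos hε (by nlinarith [hB0 i]), ?_⟩
    intro ν ⟨hνJ, hνμ⟩ hd
    have hνμ' : ν < μ := hνμ
    have hdd : μ - ν < ε / (2 * (B i + 1)) := by
      rw [Real.dist_eq, abs_lt] at hd
      linarith [hd.1]
    have hup : c ν ≤ M i μ + (μ - ν) * B i :=
      le_trans (hle i ν hνJ) (hMlip i μ ν hνμ'.le)
    have hlow : c μ ≤ c ν := hanti hνJ hμ hνμ'.le
    have hBi := hB0 i
    have key : (μ - ν) * B i < ε / 2 := by
      have h3 : (μ - ν) * (B i + 1) < ε / 2 := by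
        have := mul_lt_mul_of_pos_right hdd (by positivity : (0:ℝ) < B i + 1)
        calc (μ - ν) * (B i + 1) < ε / (2 * (B i + 1)) * (B i + 1) := this
          _ = ε / 2 := by field_simp
      nlinarith
    rw [Real.dist_eq, abs_lt]
    constructor <;> nlinarith
  · have hmono : MonotoneOn (fun x => -c x) J := hanti.neg
    filter_upwards [hmono.ae_differentiableWithinAt_of_mem] with μ h hμ
    have hd := (h hμ).hasDerivWithinAt
    exact ⟨-(derivWithin (fun x => -c x) J μ), by simpa [Pi.neg_def] using hd.neg⟩
end
end

section
/- Let N ≥ 5, 2* = 2N/(N−2), and let c₃, C₂ > 0. Let a : (0,1] → (0, ∞) satisfy a(ε) ≥ c₃·ε² for every ε ∈ (0,1]. Then there exist constants C > 0 and μ** > 0 such that for every μ ∈ (0, μ**) and every ε ∈ (0,1]: (1/2)·(1/a(ε)) − (μ/2*)·(1/a(ε))^{2*/2} + C₂·ε^{N−4} ≤ (1/N)·μ^{1−N/2} + C·μ^{(N−2)(N−4)/4}. -/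
open Set

noncomputable section

/-- The critical Sobolev exponent `2* = 2N/(N-2)`. -/
def critExp (N : ℕ) : ℝ := 2 * (N : ℝ) / ((N : ℝ) - 2)

lemma young_key (n : ℝ) (hn : 5 ≤ n) (t μ : ℝ) (ht : 0 < t) (hμ : 0 < μ) :
    (1/2) * t - (μ / (2*n/(n-2))) * t ^ (n/(n-2)) ≤ (1/n) * μ ^ (1 - n/2) := by
  have hn2 : (0:ℝ) < n - 2 := by linarith
  have hn0 : (0:ℝ) < n := by linarith
  have hμ2 : (0:ℝ) < μ/2 := by linarith
  set P := n/(n-2) with hP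
  set Q := n/2 with hQ
  have hpq : P.HolderConjugate Q := by
    rw [Real.holderConjugate_iff]; constructor
    · rw [hP, lt_div_iff₀ hn2]; linarith
    · rw [hP, hQ]; field_simp; ring
  set α := (μ/2) ^ ((n-2)/n) with hα
  have hα0 : 0 < α := Real.rpow_pos_of_pos hμ2 _
  have key := Real.young_inequality_of_nonneg (a := α * t) (b := (2*α)⁻¹)
    (by positivity) (by positivity) hpq
  have hab : (α * t) * (2*α)⁻¹ = (1/2) * t := by field_simp
  have hexp1 : (n-2)/n * P = 1 := by rw [hP]; field_simp
  have haP : (α * t) ^ P = (μ/2) * t ^ P := by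
    rw [Real.mul_rpow hα0.le ht.le, hα, ← Real.rpow_mul hμ2.le, hexp1, Real.rpow_one]
  have hexp2 : (n-2)/n * Q = (n-2)/2 := by rw [hQ]; field_simp
  have hαQ : α ^ Q = μ ^ ((n-2)/2) / 2 ^ ((n-2)/2) := by
    rw [hα, ← Real.rpow_mul hμ2.le, hexp2,
      Real.div_rpow hμ.le (by norm_num : (0:ℝ) ≤ 2)]
  have h2Q : (2:ℝ) ^ Q / 2 ^ ((n-2)/2) = 2 := by
    rw [← Real.rpow_sub (by norm_num : (0:ℝ) < 2)]
    have : Q - (n-2)/2 = 1 := by rw [hQ]; ring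
    rw [this, Real.rpow_one]
  have hbQ : ((2*α)⁻¹) ^ Q = (1/2) * μ ^ (1 - n/2) := by
    rw [Real.inv_rpow (by positivity), Real.mul_rpow (by norm_num : (0:ℝ) ≤ 2) hα0.le, hαQ]
    have h1 : (2:ℝ)^Q * (μ ^ ((n-2)/2) / 2 ^ ((n-2)/2)) = 2 * μ ^ ((n-2)/2) := by
      rw [mul_div_assoc']
      rw [mul_comm ((2:ℝ)^Q) _, mul_div_assoc, h2Q, mul_comm]
    rw [h1, mul_inv]
    have h2 : (μ ^ ((n-2)/2))⁻¹ = μ ^ (1 - n/2) := by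
      rw [← Real.rpow_neg hμ.le]
      congr 1; ring
    rw [h2]; norm_num
  rw [hab, haP, hbQ] at key
  have hPp : 0 < P := by rw [hP]; positivity
  have hQeq : (1/2) * μ ^ (1 - n/2) / Q = (1/n) * μ ^ (1 - n/2) := by
    rw [hQ]; field_simp
  have hPeq : (μ/2) * t ^ P / P = (μ / (2*n/(n-2))) * t ^ P := by
    rw [hP]; field_simp
  rw [hQeq, hPeq] at key
  linarith

/-- the key supremum estimate for the mountain pass level in dimension
`N ≥ 5`. If `a(ε) ≥ c₃ε²`, then for suitable `C > 0` and small `μ`,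
`(1/2)(1/a(ε)) - (μ/2*)(1/a(ε))^{2*/2} + C₂ε^{N-4} ≤ (1/N)μ^{1-N/2} + Cμ^{(N-2)(N-4)/4}`. -/
theorem statement9 (N : ℕ) (hN : 5 ≤ N) (c₃ C₂ : ℝ) (hc₃ : 0 < c₃) (hC₂ : 0 < C₂)
    (a : ℝ → ℝ) (hapos : ∀ ε ∈ Ioc (0 : ℝ) 1, 0 < a ε)
    (ha : ∀ ε ∈ Ioc (0 : ℝ) 1, c₃ * ε ^ 2 ≤ a ε) :
    ∃ C : ℝ, 0 < C ∧ ∃ μstar : ℝ, 0 < μstar ∧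
      ∀ μ ∈ Ioo (0 : ℝ) μstar, ∀ ε ∈ Ioc (0 : ℝ) 1,
        (1 / 2) * (1 / a ε) - (μ / critExp N) * (1 / a ε) ^ (critExp N / 2)
            + C₂ * ε ^ ((N : ℝ) - 4)
          ≤ (1 / N : ℝ) * μ ^ (1 - (N : ℝ) / 2)
            + C * μ ^ (((N : ℝ) - 2) * ((N : ℝ) - 4) / 4) := by
  set n : ℝ := (N : ℝ) with hn_def
  have hn : (5:ℝ) ≤ n := by rw [hn_def]; exact_mod_cast hN
  have hn0 : (0:ℝ) < n := by linarith
  have hn2 : (0:ℝ) < n - 2 := by linarith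
  have hn4 : (0:ℝ) ≤ n - 4 := by linarith
  set K : ℝ := 2 * n / c₃ with hK
  have hK0 : 0 < K := by rw [hK]; positivity
  have hc1 : critExp N = 2*n/(n-2) := by rw [critExp, hn_def]
  have hc2 : critExp N / 2 = n/(n-2) := by rw [hc1]; ring
  have hcp : 0 < critExp N := by rw [hc1]; positivity
  have h4nC : (0:ℝ) < 4*n*C₂ := by positivity
  refine ⟨C₂ * K ^ ((n-4)/2), mul_pos hC₂ (Real.rpow_pos_of_pos hK0 _),
    min 1 ((3/(4*n*C₂)) ^ (2/(n-2))), lt_min one_pos (Real.rpow_pos_of_pos (by positivity) _), ?_⟩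
  rintro μ ⟨hμ0, hμlt⟩ ε ⟨hε0, hε1⟩
  have haε : 0 < a ε := hapos ε ⟨hε0, hε1⟩
  have haεb : c₃ * ε ^ 2 ≤ a ε := ha ε ⟨hε0, hε1⟩
  set Y : ℝ := μ ^ ((n-2)/2) with hY
  have hY0 : 0 < Y := Real.rpow_pos_of_pos hμ0 _
  have hinv : μ ^ (1 - n/2) = Y⁻¹ := by
    rw [hY, ← Real.rpow_neg hμ0.le]
    congr 1; ring
  have hμsmall : Y < 3/(4*n*C₂) := by
    have h1 : μ < (3/(4*n*C₂)) ^ (2/(n-2)) := lt_of_lt_of_le hμlt (min_le_right _ _)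
    have h2 := Real.rpow_lt_rpow hμ0.le h1 (by positivity : (0:ℝ) < (n-2)/2)
    rwa [← Real.rpow_mul (by positivity), (show 2/(n-2) * ((n-2)/2) = 1 by field_simp),
      Real.rpow_one] at h2
  have hkey := young_key n hn (1 / a ε) μ (by positivity) hμ0
  rw [← hc1, ← hc2] at hkey
  have hεpow : ε ^ (n - 4) = (ε^2) ^ ((n-4)/2) := by
    rw [← Real.rpow_natCast ε 2, ← Real.rpow_mul hε0.le]
    congr 1; push_cast; ring
  rcases le_or_gt (ε^2) (K * Y) with hcase | hcase
  · -- small ε: absorb ε^{N-4} into C μ^{(N-2)(N-4)/4}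
    have hYpow : Y ^ ((n-4)/2) = μ ^ ((n-2)*(n-4)/4) := by
      rw [hY, ← Real.rpow_mul hμ0.le]
      congr 1; ring
    have hb : (ε^2) ^ ((n-4)/2) ≤ K ^ ((n-4)/2) * μ ^ ((n-2)*(n-4)/4) := by
      rw [← hYpow, ← Real.mul_rpow hK0.le hY0.le]
      exact Real.rpow_le_rpow (by positivity) hcase (by positivity)
    have hb2 : C₂ * ε ^ (n - 4) ≤ C₂ * K ^ ((n-4)/2) * μ ^ ((n-2)*(n-4)/4) := by
      rw [hεpow, mul_assoc]
      exact mul_le_mul_of_nonneg_left hb hC₂.le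
    linarith
  · -- large ε: the linear term is small
    have haK : 2*n*Y < a ε := by
      have h1 := mul_lt_mul_of_pos_left hcase hc₃
      rw [show c₃ * (K * Y) = 2*n*Y by rw [hK]; field_simp] at h1
      linarith
    have hstep1 : 1 / a ε ≤ 1 / (2*n*Y) := one_div_le_one_div_of_le (by positivity) haK.le
    have hneg : 0 ≤ μ / critExp N * (1 / a ε) ^ (critExp N / 2) :=
      mul_nonneg (div_nonneg hμ0.le hcp.le) (Real.rpow_nonneg (by positivity) _)
    have hε4 : ε ^ (n - 4) ≤ 1 := Real.rpow_le_one hε0.le hε1 hn4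
    have hεb : C₂ * ε ^ (n - 4) ≤ C₂ := by nlinarith
    have hC₂b : C₂ ≤ 3/(4*n) * Y⁻¹ := by
      have h1 : Y * (4*n*C₂) < 3 := (lt_div_iff₀ h4nC).mp hμsmall
      have h2 : C₂ * (4*n*Y) ≤ 3 := by nlinarith
      have h3 : C₂ ≤ 3/(4*n*Y) := (le_div_iff₀ (by positivity)).mpr h2
      rwa [show (3:ℝ)/(4*n*Y) = 3/(4*n) * Y⁻¹ by field_simp] at h3
    have he1 : (1/2) * ((1:ℝ)/(2*n*Y)) = 1/(4*n) * Y⁻¹ := by field_simp; ring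
    have he3 : 1/(4*n) * Y⁻¹ + 3/(4*n) * Y⁻¹ = (1/n) * Y⁻¹ := by field_simp; ring
    have hCq : 0 ≤ C₂ * K ^ ((n-4)/2) * μ ^ ((n-2)*(n-4)/4) := by positivity
    rw [hinv]
    linarith
end
end

section
/- Let N = 4 and let c₃, C₂ > 0. Let a : (0, 1/2] → (0, ∞) satisfy a(ε) ≥ c₃·ε²·|ln ε| for every ε ∈ (0, 1/2]. Then there exist constants C > 0 and μ** ∈ (0,1) such that for every μ ∈ (0, μ**) and every ε ∈ (0, 1/2]: (1/2)·(1/a(ε)) − (μ/4)·(1/a(ε))² + C₂/|ln ε| ≤ (1/4)·μ^{−1} + C/|ln μ|. -/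
open Set

noncomputable section

/-- the key supremum estimate for the mountain pass level in dimension
`N = 4`. If `a(ε) ≥ c₃ε²|ln ε|` on `(0,1/2]`, then for suitable `C > 0` and small `μ`,
`(1/2)(1/a(ε)) - (μ/4)(1/a(ε))² + C₂/|ln ε| ≤ (1/4)μ⁻¹ + C/|ln μ|`. -/
theorem statement10 (c₃ C₂ : ℝ) (hc₃ : 0 < c₃) (hC₂ : 0 < C₂)
    (a : ℝ → ℝ) (hapos : ∀ ε ∈ Ioc (0 : ℝ) (1 / 2), 0 < a ε)
    (ha : ∀ ε ∈ Ioc (0 : ℝ) (1 / 2), c₃ * ε ^ 2 * |Real.log ε| ≤ a ε) :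
    ∃ C : ℝ, 0 < C ∧ ∃ μstar ∈ Ioo (0 : ℝ) 1,
      ∀ μ ∈ Ioo (0 : ℝ) μstar, ∀ ε ∈ Ioc (0 : ℝ) (1 / 2),
        (1 / 2) * (1 / a ε) - (μ / 4) * (1 / a ε) ^ 2 + C₂ / |Real.log ε|
          ≤ (1 / 4) * μ⁻¹ + C / |Real.log μ| := by
  have l2 : (0 : ℝ) < Real.log 2 := Real.log_pos (by norm_num)
  refine ⟨4 * C₂, by positivity,
    min (1 / 2) (min ((c₃ * Real.log 2 / 4) ^ 2) (Real.log 2 / (8 * C₂))),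
    ⟨?_, ?_⟩, ?_⟩
  · refine lt_min (by norm_num) (lt_min (by positivity) (by positivity))
  · exact lt_of_le_of_lt (min_le_left _ _) (by norm_num)
  intro μ hμ ε hε
  obtain ⟨hμ0, hμlt⟩ := hμ
  obtain ⟨hε0, hεle⟩ := hε
  have hμ2 : μ < 1 / 2 := lt_of_lt_of_le hμlt (min_le_left _ _)
  have hμA : μ < (c₃ * Real.log 2 / 4) ^ 2 :=
    lt_of_lt_of_le hμlt (le_trans (min_le_right _ _) (min_le_left _ _))
  have hμB : μ < Real.log 2 / (8 * C₂) :=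
    lt_of_lt_of_le hμlt (le_trans (min_le_right _ _) (min_le_right _ _))
  have haε : 0 < a ε := hapos ε ⟨hε0, hεle⟩
  have halb := ha ε ⟨hε0, hεle⟩
  have hlε : Real.log ε < 0 := Real.log_neg hε0 (by linarith)
  have hlμ : Real.log μ < 0 := Real.log_neg hμ0 (by linarith)
  have hlogε : Real.log 2 ≤ |Real.log ε| := by
    rw [abs_of_neg hlε]
    have h1 : Real.log ε ≤ Real.log (1 / 2) := Real.log_le_log hε0 hεle
    rw [one_div, Real.log_inv] at h1
    linarith
  have habsε : 0 < |Real.log ε| := lt_of_lt_of_le l2 hlogε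
  have hlogμ : 0 < |Real.log μ| := by rw [abs_of_neg hlμ]; linarith
  set t := 1 / a ε with ht
  have ht0 : 0 < t := by positivity
  have key : (1 / 2) * t - (μ / 4) * t ^ 2 ≤ (1 / 4) * μ⁻¹ := by
    rw [← sub_nonneg]
    have heq : (1 / 4) * μ⁻¹ - ((1 / 2) * t - (μ / 4) * t ^ 2)
        = (μ * t - 1) ^ 2 / (4 * μ) := by
      field_simp
      ring
    rw [heq]
    positivity
  by_cases hcase : ε ^ 2 ≤ Real.sqrt μ
  · have hs2 : Real.sqrt μ ^ 2 = μ := Real.sq_sqrt hμ0.le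
    have h4 : ε ^ 4 ≤ μ := by nlinarith [sq_nonneg ε, Real.sqrt_nonneg μ]
    have hln : |Real.log μ| ≤ 4 * |Real.log ε| := by
      have h1 : Real.log (ε ^ 4) ≤ Real.log μ := Real.log_le_log (by positivity) h4
      rw [Real.log_pow] at h1
      rw [abs_of_neg hlε, abs_of_neg hlμ]
      push_cast at h1
      linarith
    have hC : C₂ / |Real.log ε| ≤ 4 * C₂ / |Real.log μ| := by
      rw [div_le_div_iff₀ habsε hlogμ]
      nlinarith
    linarith
  · push_neg at hcase
    have hs : 0 < Real.sqrt μ := Real.sqrt_pos.2 hμ0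
    have hs2 : Real.sqrt μ ^ 2 = μ := Real.sq_sqrt hμ0.le
    have hs_lt : Real.sqrt μ < c₃ * Real.log 2 / 4 :=
      (Real.sqrt_lt' (by positivity)).2 hμA
    have ha2 : c₃ * Real.sqrt μ * Real.log 2 ≤ a ε := by
      calc c₃ * Real.sqrt μ * Real.log 2 ≤ c₃ * ε ^ 2 * Real.log 2 :=
            mul_le_mul_of_nonneg_right
              (mul_le_mul_of_nonneg_left hcase.le hc₃.le) l2.le
        _ ≤ c₃ * ε ^ 2 * |Real.log ε| :=
            mul_le_mul_of_nonneg_left hlogε (by positivity)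
        _ ≤ a ε := halb
    have htle : t ≤ 1 / (c₃ * Real.sqrt μ * Real.log 2) :=
      one_div_le_one_div_of_le (by positivity) ha2
    have hC2 : C₂ / |Real.log ε| ≤ C₂ / Real.log 2 :=
      div_le_div_of_nonneg_left hC₂.le l2 hlogε
    have h1 : (1 / 2) * (1 / (c₃ * Real.sqrt μ * Real.log 2))
        ≤ (1 / 8) * μ⁻¹ := by
      conv_rhs => rw [← hs2]
      rw [show (1 / 2 : ℝ) * (1 / (c₃ * Real.sqrt μ * Real.log 2))
          = 1 / (2 * (c₃ * Real.sqrt μ * Real.log 2)) by ring,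
        show (1 / 8 : ℝ) * (Real.sqrt μ ^ 2)⁻¹ = 1 / (8 * Real.sqrt μ ^ 2) by ring]
      apply one_div_le_one_div_of_le (by positivity)
      nlinarith
    have h2 : C₂ / Real.log 2 ≤ (1 / 8) * μ⁻¹ := by
      rw [show (1 / 8 : ℝ) * μ⁻¹ = 1 / (8 * μ) by ring,
        div_le_div_iff₀ l2 (by positivity)]
      rw [lt_div_iff₀ (by positivity)] at hμB
      ring_nf
      ring_nf at hμB
      linarith
    have hpos : 0 < 4 * C₂ / |Real.log μ| := by positivity
    have hmt : (1 / 2) * t ≤ (1 / 2) * (1 / (c₃ * Real.sqrt μ * Real.log 2)) := by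
      linarith
    have hsq : 0 ≤ (μ / 4) * t ^ 2 := by positivity
    linarith
end
end

section
/- Let N = 3 and let c₃, C₂ > 0. Let a : (0,1] → (0, ∞) satisfy a(ε) ≥ c₃·ε for every ε ∈ (0,1]. Then there exist constants C > 0 and μ** > 0 such that for every μ ∈ (0, μ**) and every ε ∈ (0,1]: (1/2)·(1/a(ε)) − (μ/6)·(1/a(ε))³ + C₂·ε + C₂·μ ≤ (1/3)·μ^{−1/2} + C·μ^{1/2}. -/
open Set

noncomputable section

/-- the key supremum estimate for the mountain pass level in dimension
`N = 3`. If `a(ε) ≥ c₃ε` on `(0,1]`, then for suitable `C > 0` and small `μ`,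
`(1/2)(1/a(ε)) - (μ/6)(1/a(ε))³ + C₂ε + C₂μ ≤ (1/3)μ^{-1/2} + Cμ^{1/2}`. -/
theorem statement11 (c₃ C₂ : ℝ) (hc₃ : 0 < c₃) (hC₂ : 0 < C₂)
    (a : ℝ → ℝ) (hapos : ∀ ε ∈ Ioc (0 : ℝ) 1, 0 < a ε)
    (ha : ∀ ε ∈ Ioc (0 : ℝ) 1, c₃ * ε ≤ a ε) :
    ∃ C : ℝ, 0 < C ∧ ∃ μstar : ℝ, 0 < μstar ∧
      ∀ μ ∈ Ioo (0 : ℝ) μstar, ∀ ε ∈ Ioc (0 : ℝ) 1,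
        (1 / 2) * (1 / a ε) - (μ / 6) * (1 / a ε) ^ 3 + C₂ * ε + C₂ * μ
          ≤ (1 / 3) * μ ^ (-(1 : ℝ) / 2) + C * μ ^ ((1 : ℝ) / 2) := by
  refine ⟨C₂ + 2 * C₂ / c₃, by positivity, min 1 (1 / (12 * C₂)) ^ 2, by positivity, ?_⟩
  rintro μ ⟨hμ0, hμlt⟩ ε ⟨hε0, hε1⟩
  have hA := hapos ε ⟨hε0, hε1⟩
  have haε := ha ε ⟨hε0, hε1⟩
  set m : ℝ := μ ^ ((1 : ℝ) / 2) with hmdef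
  have hm : 0 < m := Real.rpow_pos_of_pos hμ0 _
  have hm2 : m ^ 2 = μ := by
    rw [hmdef, ← Real.rpow_natCast (μ ^ ((1:ℝ)/2)) 2, ← Real.rpow_mul hμ0.le]
    norm_num
  have hneg : μ ^ (-(1 : ℝ) / 2) = m⁻¹ := by
    rw [show (-(1:ℝ)/2) = -(1/2) by ring, Real.rpow_neg hμ0.le, hmdef]
  have hmin : 0 < min 1 (1 / (12 * C₂)) := by positivity
  have hmlt : m < min 1 (1 / (12 * C₂)) := by
    nlinarith [sq_nonneg (m - min 1 (1 / (12 * C₂)))]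
  have hm1 : m < 1 := lt_of_lt_of_le hmlt (min_le_left _ _)
  have hmC : 12 * C₂ * m < 1 := by
    have := lt_of_lt_of_le hmlt (min_le_right _ _)
    rw [lt_div_iff₀ (by positivity)] at this
    linarith
  set t : ℝ := 1 / a ε with htdef
  have ht : 0 < t := by positivity
  have hεt : c₃ * ε * t ≤ 1 := by
    rw [htdef]
    calc c₃ * ε * (1 / a ε) ≤ a ε * (1 / a ε) := by
          apply mul_le_mul_of_nonneg_right haε; positivity
      _ = 1 := by field_simp
  rw [hneg, ← hm2]
  rw [← mul_le_mul_iff_right₀ hm]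
  have hinv : m * ((1/3) * m⁻¹) = 1/3 := by field_simp
  clear_value m t
  clear hμlt hmlt hmin hmdef htdef hneg hapos ha hm2
  rcases le_or_gt (1 / (2 * m)) t with hcase | hcase
  · -- ε ≤ 2 m / c₃
    have hεb : c₃ * ε ≤ 2 * m := by
      have h2 : 1 ≤ 2 * m * t := by
        rw [div_le_iff₀ (by positivity)] at hcase; linarith
      nlinarith
    have hkey : 3 * (m * t) - (m * t) ^ 3 ≤ 2 := by
      nlinarith [sq_nonneg (m * t - 1), mul_pos hm ht]
    have : m * ((1 / 2) * t - (m ^ 2 / 6) * t ^ 3 + C₂ * ε + C₂ * m ^ 2)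
        ≤ 1/3 + (C₂ + 2 * C₂ / c₃) * m ^ 2 := by
      have hεm : C₂ * ε * m ≤ (2 * C₂ / c₃) * m ^ 2 := by
        rw [div_mul_eq_mul_div, le_div_iff₀ hc₃]
        nlinarith [mul_le_mul_of_nonneg_right hεb (mul_nonneg hC₂.le hm.le)]
      nlinarith [hkey, hεm, mul_nonneg (mul_nonneg hm.le hm.le)
        (by linarith : (0:ℝ) ≤ 1 - m)]
    calc m * ((1 / 2) * t - (m ^ 2 / 6) * t ^ 3 + C₂ * ε + C₂ * m ^ 2) ≤
        1/3 + (C₂ + 2 * C₂ / c₃) * m ^ 2 := this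
      _ = m * ((1/3) * m⁻¹ + (C₂ + 2 * C₂ / c₃) * m) := by rw [mul_add, hinv]; ring
  · -- t < 1/(2m): m*t < 1/2
    have hmt : m * t < 1 / 2 := by
      rw [lt_div_iff₀ (by positivity)] at hcase; linarith [hcase]
    have hC2m : C₂ * m ≤ 1 / 12 := by linarith
    have : m * ((1 / 2) * t - (m ^ 2 / 6) * t ^ 3 + C₂ * ε + C₂ * m ^ 2)
        ≤ 1/3 + (C₂ + 2 * C₂ / c₃) * m ^ 2 := by
      have h1 : m * ((1/2) * t) ≤ 1/4 := by nlinarith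
      have h2 : m * (C₂ * ε) ≤ 1/12 := by
        nlinarith [mul_nonneg (mul_nonneg hm.le hC₂.le) (by linarith : (0:ℝ) ≤ 1 - ε)]
      have h3 : 0 ≤ m * ((m^2/6) * t^3) := by positivity
      have h4 : m * (C₂ * m ^ 2) ≤ C₂ * m ^ 2 := by
        nlinarith [mul_nonneg (mul_nonneg hC₂.le (sq_nonneg m)) (by linarith : (0:ℝ) ≤ 1 - m)]
      have h5 : 0 ≤ (2 * C₂ / c₃) * m ^ 2 := by positivity
      nlinarith
    calc m * ((1 / 2) * t - (m ^ 2 / 6) * t ^ 3 + C₂ * ε + C₂ * m ^ 2) ≤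
        1/3 + (C₂ + 2 * C₂ / c₃) * m ^ 2 := this
      _ = m * ((1/3) * m⁻¹ + (C₂ + 2 * C₂ / c₃) * m) := by rw [mul_add, hinv]; ring
end
end

section
/- Let N ≥ 3, S > 0, C > 0, and in addition, if N = 3, let h₀ ≥ 0 and δ₀ > 0 satisfy (1/3)·S^{3/2}·δ₀ > h₀. For μ ∈ (0,1) define h(μ) = C·μ^{(N−2)(N−4)/4} if N ≥ 5, h(μ) = C/|ln μ| if N = 4, h(μ) = h₀ + C·μ^{1/2} if N = 3; δ(μ) = μ^{(N−1)/2} if N ≥ 5, δ(μ) = μ·|ln μ|^{−1/2} if N = 4, δ(μ) = δ₀·μ^{1/2} if N = 3; and g(μ) = (1/N)·S^{N/2}·μ^{1−N/2} + h(μ). Let μ** ∈ (0,1) be such that g is non-increasing on (0, μ**), and let c : (0, μ**) → ℝ be a non-increasing function satisfying (1/N)·S^{N/2}·μ^{1−N/2} ≤ c(μ) ≤ g(μ) for every μ ∈ (0, μ**). Then there exists a Lebesgue measurable set S₀ ⊆ (0, μ**) such that: (1) for every μ ∈ (0, μ**), the set S₀ ∩ (0, μ) has positive Lebesgue measure; (2)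 for every μ ∈ S₀, c is differentiable at μ and −c′(μ) ≤ (1 + δ(μ))·(−g′(μ)). -/
open Set MeasureTheory Filter Real

noncomputable section

lemma deriv_nonpos_of_antitoneOn {g : ℝ → ℝ} {s : Set ℝ} {x d : ℝ}
    (hs : s ∈ nhds x) (hg : AntitoneOn g s) (hd : HasDerivAt g d x) : d ≤ 0 := by
  by_contra hpos
  push_neg at hpos
  have h1 : ∀ᶠ y in nhdsWithin x (Ioi x), 0 < slope g x y := by
    have h2 := (hasDerivAt_iff_tendsto_slope.1 hd).eventually (eventually_gt_nhds hpos)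
    exact h2.filter_mono (nhdsWithin_mono x (fun y hy => ne_of_gt hy))
  have h2 : ∀ᶠ y in nhdsWithin x (Ioi x), y ∈ s :=
    mem_nhdsWithin_of_mem_nhds hs
  have h3 : ∀ᶠ y in nhdsWithin x (Ioi x), y ∈ Ioi x := self_mem_nhdsWithin
  obtain ⟨y, hy1, hy2, hy3⟩ := (h1.and (h2.and h3)).exists
  have hxy : x < y := hy3
  have hslope : 0 < (g y - g x) / (y - x) := by
    rw [slope_def_field] at hy1; exact hy1
  have : 0 < g y - g x := by
    have := mul_pos hslope (sub_pos.2 hxy)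
    rwa [div_mul_cancel₀] at this
    exact (sub_pos.2 hxy).ne'
  have hle := hg (mem_of_mem_nhds hs) hy2 hxy.le
  linarith

lemma struwe_core (μstar : ℝ) (hμs : 0 < μstar)
    (c g δf h G' : ℝ → ℝ)
    (hg' : ∀ x ∈ Ioo (0:ℝ) μstar, HasDerivAt g (G' x) x)
    (hG'c : ContinuousOn G' (Ioo 0 μstar))
    (hgmono : AntitoneOn g (Ioo 0 μstar))
    (hcmono : AntitoneOn c (Ioo 0 μstar))
    (hclb : ∀ μ ∈ Ioo (0:ℝ) μstar, g μ - h μ ≤ c μ)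
    (hcub : ∀ μ ∈ Ioo (0:ℝ) μstar, c μ ≤ g μ)
    (hδ0 : ∀ μ ∈ Ioo (0:ℝ) μstar, 0 ≤ δf μ)
    (hδmono : ∀ x ∈ Ioo (0:ℝ) μstar, ∀ y ∈ Ioo (0:ℝ) μstar, x ≤ y → δf x ≤ δf y)
    (hδmeas : Measurable δf)
    (hviol : ∀ μb ∈ Ioo (0:ℝ) μstar, ∃ m b, 0 < m ∧ m < b ∧ b < μb ∧ h b < δf m * (g m - g b)) :
    ∃ S₀ : Set ℝ, MeasurableSet S₀ ∧ S₀ ⊆ Ioo 0 μstar ∧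
      (∀ μ ∈ Ioo (0 : ℝ) μstar, 0 < volume (S₀ ∩ Ioo 0 μ)) ∧
      (∀ μ ∈ S₀, ∃ c' g' : ℝ, HasDerivAt c c' μ ∧ HasDerivAt g g' μ ∧
        -c' ≤ (1 + δf μ) * (-g')) := by
  classical
  set S₀ : Set ℝ := {x | x ∈ Ioo (0:ℝ) μstar ∧ DifferentiableAt ℝ c x ∧
      -deriv c x ≤ (1 + δf x) * (-(deriv g x))} with hS₀def
  have hS₀meas : MeasurableSet S₀ := by
    have m2 : MeasurableSet {x : ℝ | -deriv c x ≤ (1 + δf x) * (-(deriv g x))} :=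
      measurableSet_le (measurable_deriv c).neg
        ((measurable_const.add hδmeas).mul (measurable_deriv g).neg)
    have heq : S₀ = Ioo 0 μstar ∩ ({x | DifferentiableAt ℝ c x} ∩
        {x : ℝ | -deriv c x ≤ (1 + δf x) * (-(deriv g x))}) := by
      ext x; simp [hS₀def, and_assoc]
    rw [heq]
    exact measurableSet_Ioo.inter ((measurableSet_of_differentiableAt ℝ c).inter m2)
  have hG'le : ∀ x ∈ Ioo (0:ℝ) μstar, G' x ≤ 0 := fun x hx =>
    deriv_nonpos_of_antitoneOn (isOpen_Ioo.mem_nhds hx) hgmono (hg' x hx)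
  refine ⟨S₀, hS₀meas, fun x hx => hx.1, ?_, ?_⟩
  · rintro μb ⟨hμb0, hμbs⟩
    by_contra hcon
    push_neg at hcon
    rw [le_zero_iff] at hcon
    obtain ⟨m, b, hm0, hmb, hbμ, hkey⟩ := hviol μb ⟨hμb0, hμbs⟩
    set a := m / 2 with hadef
    have ha0 : 0 < a := half_pos hm0
    have ham : a < m := by rw [hadef]; linarith
    have hab : a ≤ b := by linarith
    have hbs : b < μstar := hbμ.trans hμbs
    have hIcc : Icc a b ⊆ Ioo 0 μstar := fun x hx =>
      ⟨lt_of_lt_of_le ha0 hx.1, lt_of_le_of_lt hx.2 hbs⟩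
    have haI : a ∈ Ioo (0:ℝ) μstar := hIcc ⟨le_rfl, hab⟩
    have hbI : b ∈ Ioo (0:ℝ) μstar := hIcc ⟨hab, le_rfl⟩
    have hmI : m ∈ Ioo (0:ℝ) μstar := hIcc ⟨ham.le, hmb.le⟩
    -- the clamped function
    set u : ℝ → ℝ := fun x => -(c (max a (min x b))) with hu_def
    have hu : Monotone u := by
      intro x y hxy
      have h1 : max a (min x b) ≤ max a (min y b) :=
        max_le_max le_rfl (min_le_min hxy le_rfl)
      have hx1 : max a (min x b) ∈ Icc a b := ⟨le_max_left _ _, max_le hab (min_le_right _ _)⟩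
      have hy1 : max a (min y b) ∈ Icc a b := ⟨le_max_left _ _, max_le hab (min_le_right _ _)⟩
      simpa [hu_def] using neg_le_neg (hcmono (hIcc hx1) (hIcc hy1) h1)
    set F := hu.stieltjesFunction with hF_def
    set ρ : ℝ → ℝ := fun x => (F.measure.rnDeriv volume x).toReal with hρ_def
    have hρae : ∀ᵐ x, HasDerivAt u (ρ x) x := hu.ae_hasDerivAt
    have hρ0 : ∀ x, 0 ≤ ρ x := fun x => ENNReal.toReal_nonneg
    have hua : u a = -(c a) := by simp [hu_def, min_eq_left hab]
    have hub : u b = -(c b) := by simp [hu_def, min_self, max_eq_right hab]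
    have hFb : F b ≤ u b := by
      have h1 : Function.rightLim u b ≤ u (b+1) := hu.rightLim_le (lt_add_one b)
      have h2 : u (b+1) = u b := by
        simp [hu_def, min_eq_right (by linarith : b ≤ b + 1), min_self]
      rw [hu.stieltjesFunction_eq]; rw [h2] at h1; exact h1
    have hFa : u a ≤ F a := by
      rw [hu.stieltjesFunction_eq]; exact hu.le_rightLim le_rfl
    have hlint : ∫⁻ x in Ioo a b, F.measure.rnDeriv volume x ∂volume
        ≤ ENNReal.ofReal (u b - u a) := by
      refine le_trans (Measure.setLIntegral_rnDeriv_le _) ?_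
      refine le_trans (measure_mono Ioo_subset_Ioc_self) ?_
      rw [F.measure_Ioc]
      exact ENNReal.ofReal_le_ofReal (by linarith)
    have hρint : IntegrableOn ρ (Ioo a b) volume := by
      refine integrable_toReal_of_lintegral_ne_top
        (Measure.measurable_rnDeriv _ _).aemeasurable ?_
      exact ne_top_of_le_ne_top ENNReal.ofReal_ne_top hlint
    have hIub : ∫ x in Ioo a b, ρ x ∂volume ≤ c a - c b := by
      have hfin : ∀ᵐ x ∂(volume.restrict (Ioo a b)), F.measure.rnDeriv volume x < ⊤ :=
        ae_restrict_of_ae (Measure.rnDeriv_lt_top _ _)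
      have h1 : ∫ x in Ioo a b, ρ x ∂volume
          = (∫⁻ x in Ioo a b, F.measure.rnDeriv volume x ∂volume).toReal :=
        integral_toReal (Measure.measurable_rnDeriv _ _).aemeasurable hfin
      rw [h1]
      refine le_trans (ENNReal.toReal_mono ENNReal.ofReal_ne_top hlint) ?_
      rw [ENNReal.toReal_ofReal (by rw [hua, hub]; have := hcmono haI hbI hab; linarith)]
      rw [hua, hub]; ring_nf; exact le_rfl
    -- a.e. x in Ioo a b is not in S₀
    have hnull : volume (S₀ ∩ Ioo a b) = 0 := by
      refine measure_mono_null ?_ hcon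
      refine inter_subset_inter_right _ ?_
      intro x hx
      exact ⟨lt_trans ha0 hx.1, lt_trans hx.2 hbμ⟩
    have hae1 : ∀ᵐ x ∂(volume : Measure ℝ), x ∈ Ioo a b → x ∉ S₀ := by
      rw [ae_iff]
      refine measure_mono_null ?_ hnull
      intro x hx
      simp only [mem_setOf_eq, Classical.not_imp, not_not] at hx
      exact ⟨hx.2, hx.1⟩
    -- key a.e. lower bound
    have haeK : ∀ᵐ x ∂(volume : Measure ℝ), x ∈ Ioo a b →
        (1 + δf x) * (-(G' x)) ≤ ρ x := by
      filter_upwards [hρae, hae1] with x hxd hxS hxmem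
      have hxμ : x ∈ Ioo (0:ℝ) μstar := hIcc (Ioo_subset_Icc_self hxmem)
      have hev : (fun y => -(c y)) =ᶠ[nhds x] u := by
        filter_upwards [isOpen_Ioo.mem_nhds hxmem] with y hy
        have hyy : max a (min y b) = y := by
          rw [min_eq_left hy.2.le, max_eq_right hy.1.le]
        simp [hu_def, hyy]
      have hcd : HasDerivAt c (-(ρ x)) x := by
        have h1 : HasDerivAt (fun y => -(c y)) (ρ x) x := hxd.congr_of_eventuallyEq hev
        have h2 : HasDerivAt (fun y => -(-(c y))) (-(ρ x)) x := h1.neg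
        simpa using h2
      by_contra hlt
      push_neg at hlt
      refine hxS hxmem ⟨hxμ, hcd.differentiableAt, ?_⟩
      rw [hcd.deriv, (hg' x hxμ).deriv]
      simp only [neg_neg]
      linarith
    have hane : ∀ᵐ x ∂(volume : Measure ℝ), x ≠ a := by
      rw [ae_iff]
      refine measure_mono_null (fun x hx => ?_) (volume_singleton (a := a))
      simpa using hx
    have hbne : ∀ᵐ x ∂(volume : Measure ℝ), x ≠ b := by
      rw [ae_iff]
      refine measure_mono_null (fun x hx => ?_) (volume_singleton (a := b))
      simpa using hx
    -- integrability facts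
    have hρIoc : IntegrableOn ρ (Ioc a b) volume := by
      rwa [IntegrableOn, Measure.restrict_congr_set Ioo_ae_eq_Ioc.symm]
    have hρii : ∀ p q, a ≤ p → p ≤ q → q ≤ b → IntervalIntegrable ρ volume p q := by
      intro p q hp hpq hq
      rw [intervalIntegrable_iff_integrableOn_Ioc_of_le hpq]
      exact hρIoc.mono_set (Ioc_subset_Ioc hp hq)
    have hG'int : ∀ p q, a ≤ p → p ≤ q → q ≤ b → IntervalIntegrable G' volume p q := by
      intro p q hp hpq hq
      apply ContinuousOn.intervalIntegrable
      apply hG'c.mono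
      rw [uIcc_of_le hpq]
      intro x hx
      exact hIcc ⟨le_trans hp hx.1, le_trans hx.2 hq⟩
    have hFTC : ∀ p q, a ≤ p → p ≤ q → q ≤ b → ∫ x in p..q, G' x = g q - g p := by
      intro p q hp hpq hq
      refine intervalIntegral.integral_eq_sub_of_hasDerivAt (fun x hx => ?_)
        (hG'int p q hp hpq hq)
      rw [uIcc_of_le hpq] at hx
      exact hg' x (hIcc ⟨le_trans hp hx.1, le_trans hx.2 hq⟩)
    -- bound 1 : ∫ a..m (-G') ≤ ∫ a..m ρ
    have hbound1 : ∫ x in a..m, (-(G' x)) ≤ ∫ x in a..m, ρ x := by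
      refine intervalIntegral.integral_mono_ae_restrict ham.le
        ((hG'int a m le_rfl ham.le hmb.le).neg) (hρii a m le_rfl ham.le hmb.le) ?_
      filter_upwards [ae_restrict_of_ae haeK, ae_restrict_mem measurableSet_Icc,
        ae_restrict_of_ae hane] with x hK hmem hne
      have hxab : x ∈ Ioo a b := ⟨lt_of_le_of_ne hmem.1 (Ne.symm hne), lt_of_le_of_lt hmem.2 hmb⟩
      have hxμ : x ∈ Ioo (0:ℝ) μstar := hIcc (Ioo_subset_Icc_self hxab)
      refine le_trans ?_ (hK hxab)
      have h1 : (0:ℝ) ≤ -(G' x) := neg_nonneg.2 (hG'le x hxμ)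
      nlinarith [hδ0 x hxμ]
    -- bound 2 : ∫ m..b (1+δf m)(-G') ≤ ∫ m..b ρ
    have hbound2 : ∫ x in m..b, ((1 + δf m) * (-(G' x))) ≤ ∫ x in m..b, ρ x := by
      refine intervalIntegral.integral_mono_ae_restrict hmb.le
        ((hG'int m b ham.le hmb.le le_rfl).neg.const_mul _) (hρii m b ham.le hmb.le le_rfl) ?_
      filter_upwards [ae_restrict_of_ae haeK, ae_restrict_mem measurableSet_Icc,
        ae_restrict_of_ae hbne] with x hK hmem hne
      have hxab : x ∈ Ioo a b := ⟨lt_of_lt_of_le ham hmem.1, lt_of_le_of_ne hmem.2 hne⟩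
      have hxμ : x ∈ Ioo (0:ℝ) μstar := hIcc (Ioo_subset_Icc_self hxab)
      refine le_trans ?_ (hK hxab)
      have h1 : (0:ℝ) ≤ -(G' x) := neg_nonneg.2 (hG'le x hxμ)
      have h2 : δf m ≤ δf x := hδmono m hmI x hxμ hmem.1
      nlinarith
    have hval1 : ∫ x in a..m, (-(G' x)) = g a - g m := by
      rw [intervalIntegral.integral_neg, hFTC a m le_rfl ham.le hmb.le]; ring
    have hval2 : ∫ x in m..b, ((1 + δf m) * (-(G' x))) = (1 + δf m) * (g m - g b) := by
      rw [intervalIntegral.integral_const_mul, intervalIntegral.integral_neg,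
        hFTC m b ham.le hmb.le le_rfl]; ring
    have hsplit : (∫ x in a..m, ρ x) + ∫ x in m..b, ρ x = ∫ x in a..b, ρ x :=
      intervalIntegral.integral_add_adjacent_intervals
        (hρii a m le_rfl ham.le hmb.le) (hρii m b ham.le hmb.le le_rfl)
    have hIoo : ∫ x in a..b, ρ x = ∫ x in Ioo a b, ρ x ∂volume := by
      rw [intervalIntegral.integral_of_le hab, integral_Ioc_eq_integral_Ioo]
    have hchain : g a - g m + (1 + δf m) * (g m - g b) ≤ c a - c b := by
      calc g a - g m + (1 + δf m) * (g m - g b)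
          = (∫ x in a..m, (-(G' x))) + ∫ x in m..b, ((1 + δf m) * (-(G' x))) := by
            rw [hval1, hval2]
        _ ≤ (∫ x in a..m, ρ x) + ∫ x in m..b, ρ x := add_le_add hbound1 hbound2
        _ = ∫ x in Ioo a b, ρ x ∂volume := by rw [hsplit, hIoo]
        _ ≤ c a - c b := hIub
    have hca : c a ≤ g a := hcub a haI
    have hcb : g b - h b ≤ c b := hclb b hbI
    nlinarith
  · rintro μ ⟨hμmem, hdiff, hineq⟩
    refine ⟨deriv c μ, deriv g μ, hdiff.hasDerivAt, ?_, hineq⟩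
    have h1 := hg' μ hμmem
    rwa [h1.deriv]

lemma tendsto_rpow_zero_nhdsGT {p : ℝ} (hp : 0 < p) :
    Tendsto (fun b : ℝ => b ^ p) (nhdsWithin 0 (Ioi 0)) (nhds 0) := by
  have h1 : ContinuousAt (fun b : ℝ => b ^ p) 0 :=
    Real.continuousAt_rpow_const 0 p (Or.inr hp.le)
  have h2 := h1.tendsto
  rw [Real.zero_rpow hp.ne'] at h2
  exact h2.mono_left nhdsWithin_le_nhds

lemma viol5 (K C α β γ : ℝ) (hK : 0 < K) (hC : 0 < C) (hα : 3/4 ≤ α) (hβ : 2 ≤ β)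
    (hβγ : β + γ = 1/2) (μb : ℝ) (hμb : 0 < μb) :
    ∃ m b : ℝ, 0 < m ∧ m < b ∧ b < μb ∧
      C * b ^ α < m ^ β * (K * m ^ γ + C * m ^ α - (K * b ^ γ + C * b ^ α)) := by
  have hγ : γ ≤ -1 := by linarith
  set L : ℝ := K * 2 ^ (-β) * (2 ^ (-γ) - 1) with hL_def
  have h2γ : (1:ℝ) < 2 ^ (-γ) := by
    calc (1:ℝ) = 2 ^ (0:ℝ) := by rw [Real.rpow_zero]
    _ < 2 ^ (-γ) := Real.rpow_lt_rpow_of_exponent_lt one_lt_two (by linarith)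
  have hL : 0 < L := by
    have := Real.rpow_pos_of_pos two_pos (-β)
    have h1 : (0:ℝ) < 2 ^ (-γ) - 1 := by linarith
    positivity
  set Φ : ℝ → ℝ := fun b =>
    (b/2) ^ β * (K * (b/2) ^ γ + C * (b/2) ^ α - (K * b ^ γ + C * b ^ α)) - C * b ^ α
    with hΦ_def
  set q : ℝ → ℝ := fun b => Φ b * b ^ (-(1/2) : ℝ) with hq_def
  have hqeq : ∀ b : ℝ, 0 < b →
      q b = L + C * 2 ^ (-β) * (2 ^ (-α) - 1) * b ^ (β + α - 1/2) - C * b ^ (α - 1/2) := by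
    intro b hb
    have e1 : ∀ p : ℝ, (b/2 : ℝ) ^ p = b ^ p * 2 ^ (-p) := by
      intro p
      rw [Real.div_rpow hb.le (by norm_num : (0:ℝ) ≤ 2), Real.rpow_neg (by norm_num : (0:ℝ) ≤ 2),
        div_eq_mul_inv]
    have r1 : b ^ β * b ^ γ * b ^ (-(1/2) : ℝ) = 1 := by
      rw [← Real.rpow_add hb, ← Real.rpow_add hb,
        show β + γ + -(1/2 : ℝ) = 0 by linarith, Real.rpow_zero]
    have r2 : b ^ (β + α - 1/2) = b ^ β * b ^ α * b ^ (-(1/2) : ℝ) := by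
      rw [← Real.rpow_add hb, ← Real.rpow_add hb]; ring_nf
    have r3 : b ^ (α - 1/2) = b ^ α * b ^ (-(1/2) : ℝ) := by
      rw [← Real.rpow_add hb]; ring_nf
    rw [hq_def, hΦ_def]
    simp only
    rw [e1 β, e1 γ, e1 α, r2, r3, hL_def]
    linear_combination (K * 2 ^ (-β) * (2 ^ (-γ) - 1)) * r1
  have hq_tendsto : Tendsto q (nhdsWithin 0 (Ioi 0)) (nhds L) := by
    have h1 : Tendsto (fun b : ℝ =>
        L + C * 2 ^ (-β) * (2 ^ (-α) - 1) * b ^ (β + α - 1/2) - C * b ^ (α - 1/2))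
        (nhdsWithin 0 (Ioi 0)) (nhds (L + C * 2 ^ (-β) * (2 ^ (-α) - 1) * 0 - C * 0)) := by
      exact (tendsto_const_nhds.add ((tendsto_rpow_zero_nhdsGT (by linarith)).const_mul _)).sub
        ((tendsto_rpow_zero_nhdsGT (by linarith)).const_mul C)
    have h2 : (L + C * 2 ^ (-β) * (2 ^ (-α) - 1) * 0 - C * 0) = L := by ring
    rw [h2] at h1
    refine h1.congr' ?_
    filter_upwards [self_mem_nhdsWithin] with b hb
    exact (hqeq b hb).symm
  have hev1 : ∀ᶠ b in nhdsWithin 0 (Ioi 0), 0 < q b :=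
    hq_tendsto.eventually (eventually_gt_nhds hL)
  have hev2 : ∀ᶠ b in nhdsWithin (0:ℝ) (Ioi 0), b ∈ Ioo (0:ℝ) μb :=
    eventually_of_mem (Ioo_mem_nhdsGT_of_mem ⟨le_rfl, hμb⟩) (fun b hb => hb)
  obtain ⟨b, hqb, hbmem⟩ := (hev1.and hev2).exists
  refine ⟨b/2, b, by have := hbmem.1; positivity, by linarith [hbmem.1], hbmem.2, ?_⟩
  have hΦpos : 0 < Φ b := by
    have ht : (0:ℝ) < b ^ (-(1/2) : ℝ) := Real.rpow_pos_of_pos hbmem.1 _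
    by_contra hle
    push_neg at hle
    have : q b ≤ 0 := mul_nonpos_of_nonpos_of_nonneg hle ht.le
    linarith
  rw [hΦ_def] at hΦpos
  simp only at hΦpos
  linarith

lemma viol3 (K C h₀ δ₀ : ℝ) (hK : 0 < K) (hC : 0 < C) (hh₀ : 0 ≤ h₀) (hδ₀ : 0 < δ₀)
    (hlt : h₀ < K * δ₀) (μb : ℝ) (hμb : 0 < μb) :
    ∃ m b : ℝ, 0 < m ∧ m < b ∧ b < μb ∧
      h₀ + C * b ^ ((1:ℝ)/2) < δ₀ * m ^ ((1:ℝ)/2) *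
        (K * m ^ (-(1/2):ℝ) + (h₀ + C * m ^ ((1:ℝ)/2))
          - (K * b ^ (-(1/2):ℝ) + (h₀ + C * b ^ ((1:ℝ)/2)))) := by
  set s : ℝ := (K * δ₀ - h₀) / (2 * (K * δ₀)) with hs_def
  have hKδ : 0 < K * δ₀ := mul_pos hK hδ₀
  have hs0 : 0 < s := div_pos (by linarith) (by linarith)
  have hs1 : s < 1 := by rw [hs_def, div_lt_one (by linarith)]; linarith
  have hsval : δ₀ * K * s = (K * δ₀ - h₀) / 2 := by
    rw [hs_def]; field_simp
  have hL : 0 < δ₀ * K * (1 - s) - h₀ := by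
    have h1 : δ₀ * K * (1 - s) - h₀ = δ₀ * K - δ₀ * K * s - h₀ := by ring
    rw [h1, hsval]; linarith [hKδ]
  set Φ : ℝ → ℝ := fun b => δ₀ * (s*s*b) ^ ((1:ℝ)/2) *
      (K * (s*s*b) ^ (-(1/2):ℝ) + (h₀ + C * (s*s*b) ^ ((1:ℝ)/2))
        - (K * b ^ (-(1/2):ℝ) + (h₀ + C * b ^ ((1:ℝ)/2)))) - (h₀ + C * b ^ ((1:ℝ)/2))
    with hΦ_def
  have hΦeq : ∀ b : ℝ, 0 < b →
      Φ b = (δ₀ * K * (1 - s) - h₀) + (δ₀ * C * s * (s - 1)) * b - C * b ^ ((1:ℝ)/2) := by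
    intro b hb
    set t : ℝ := b ^ ((1:ℝ)/2) with ht_def
    have ht : 0 < t := Real.rpow_pos_of_pos hb _
    have htt : t * t = b := by
      rw [ht_def, ← Real.rpow_add hb]; norm_num
    have hss : ((s*s*b):ℝ) ^ ((1:ℝ)/2) = s * t := by
      rw [Real.mul_rpow (mul_self_nonneg s) hb.le]
      congr 1
      rw [show s * s = s ^ (2:ℕ) by ring, ← Real.rpow_natCast s 2, ← Real.rpow_mul hs0.le]
      norm_num
    have hneg : ∀ x : ℝ, 0 < x → x ^ (-(1/2):ℝ) = (x ^ ((1:ℝ)/2))⁻¹ := by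
      intro x hx
      rw [show (-(1/2):ℝ) = -((1:ℝ)/2) by norm_num, Real.rpow_neg hx.le]
    have hssb : (0:ℝ) < s * s * b := by positivity
    rw [hΦ_def]
    simp only
    rw [hss, hneg _ hssb, hneg _ hb, hss, ← ht_def]
    have hst : (0:ℝ) < s * t := by positivity
    rw [← htt]
    field_simp
    ring
  have hΦ_tendsto : Tendsto Φ (nhdsWithin 0 (Ioi 0)) (nhds (δ₀ * K * (1 - s) - h₀)) := by
    have hb0 : Tendsto (fun b : ℝ => b) (nhdsWithin (0:ℝ) (Ioi 0)) (nhds 0) :=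
      tendsto_id.mono_left nhdsWithin_le_nhds
    have h1 : Tendsto (fun b : ℝ =>
        (δ₀ * K * (1 - s) - h₀) + (δ₀ * C * s * (s - 1)) * b - C * b ^ ((1:ℝ)/2))
        (nhdsWithin (0:ℝ) (Ioi 0))
        (nhds ((δ₀ * K * (1 - s) - h₀) + (δ₀ * C * s * (s - 1)) * 0 - C * 0)) :=
      (tendsto_const_nhds.add (hb0.const_mul _)).sub
        ((tendsto_rpow_zero_nhdsGT (by norm_num)).const_mul C)
    have h2 : ((δ₀ * K * (1 - s) - h₀) + (δ₀ * C * s * (s - 1)) * 0 - C * 0)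
        = δ₀ * K * (1 - s) - h₀ := by ring
    rw [h2] at h1
    refine h1.congr' ?_
    filter_upwards [self_mem_nhdsWithin] with b hb
    exact (hΦeq b hb).symm
  have hev1 : ∀ᶠ b in nhdsWithin 0 (Ioi 0), 0 < Φ b :=
    hΦ_tendsto.eventually (eventually_gt_nhds hL)
  have hev2 : ∀ᶠ b in nhdsWithin (0:ℝ) (Ioi 0), b ∈ Ioo (0:ℝ) μb :=
    eventually_of_mem (Ioo_mem_nhdsGT_of_mem ⟨le_rfl, hμb⟩) (fun b hb => hb)
  obtain ⟨b, hΦb, hbmem⟩ := (hev1.and hev2).exists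
  have hb0 := hbmem.1
  have hss1 : s * s < 1 := by nlinarith
  refine ⟨s*s*b, b, by positivity, ?_, hbmem.2, ?_⟩
  · calc s * s * b < 1 * b := mul_lt_mul_of_pos_right hss1 hb0
      _ = b := one_mul b
  · rw [hΦ_def] at hΦb; simp only at hΦb; linarith

lemma viol4 (K C : ℝ) (hK : 0 < K) (hC : 0 < C) (μb : ℝ) (hμb0 : 0 < μb) (hμb1 : μb < 1) :
    ∃ m b : ℝ, 0 < m ∧ m < b ∧ b < μb ∧
      C / |Real.log b| < m * |Real.log m| ^ (-(1:ℝ)/2) *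
        (K * m ^ (-1:ℝ) + C / |Real.log m| - (K * b ^ (-1:ℝ) + C / |Real.log b|)) := by
  set Φ : ℝ → ℝ := fun b => (b*b) * |Real.log (b*b)| ^ (-(1:ℝ)/2) *
      (K * (b*b) ^ (-1:ℝ) + C / |Real.log (b*b)| - (K * b ^ (-1:ℝ) + C / |Real.log b|))
      - C / |Real.log b| with hΦ_def
  set A : ℝ → ℝ := fun b => Φ b * (-Real.log b) ^ ((1:ℝ)/2) with hA_def
  set u : ℝ := (2:ℝ) ^ (-(1:ℝ)/2) with hu_def
  have hu0 : 0 < u := Real.rpow_pos_of_pos two_pos _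
  have hAeq : ∀ b ∈ Ioo (0:ℝ) 1, A b = u * K * (1 - b)
      - u * C * (b*b) * (2 * (-Real.log b))⁻¹ - C * (-Real.log b) ^ (-(1:ℝ)/2) := by
    rintro b ⟨hb0, hb1⟩
    have hlb : Real.log b < 0 := Real.log_neg hb0 hb1
    set t : ℝ := -Real.log b with ht_def
    have ht : 0 < t := neg_pos.2 hlb
    have habs : |Real.log b| = t := abs_of_neg hlb
    have hlog2 : Real.log (b*b) = -(2*t) := by
      rw [Real.log_mul hb0.ne' hb0.ne', ht_def]; ring
    have habs2 : |Real.log (b*b)| = 2*t := by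
      rw [hlog2, abs_neg, abs_of_pos (by linarith)]
    have e2 : ((2:ℝ)*t) ^ (-(1:ℝ)/2) = u * t ^ (-(1:ℝ)/2) := by
      rw [Real.mul_rpow (by norm_num) ht.le, hu_def]
    set r : ℝ := t ^ ((1:ℝ)/2) with hr_def
    have hr : 0 < r := Real.rpow_pos_of_pos ht _
    have hrr : r * r = t := by rw [hr_def, ← Real.rpow_add ht]; norm_num
    have hneg : ∀ x : ℝ, 0 < x → x ^ (-(1:ℝ)/2) = (x ^ ((1:ℝ)/2))⁻¹ := by
      intro x hx
      rw [show (-(1:ℝ)/2) = -((1:ℝ)/2) by norm_num, Real.rpow_neg hx.le]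
    have hbb : ((b*b):ℝ) ^ (-1:ℝ) = (b*b)⁻¹ := by
      rw [Real.rpow_neg_one]
    have hbinv : (b:ℝ) ^ (-1:ℝ) = b⁻¹ := by rw [Real.rpow_neg_one]
    rw [hA_def, hΦ_def]
    simp only
    rw [habs, habs2, e2, hneg t ht, ← hr_def, hbb, hbinv, ← hrr]
    field_simp
    ring
  have htop : Tendsto (fun b:ℝ => -Real.log b) (nhdsWithin (0:ℝ) (Ioi 0)) atTop :=
    tendsto_neg_atBot_atTop.comp Real.tendsto_log_nhdsGT_zero
  have hb0' : Tendsto (fun b : ℝ => b) (nhdsWithin (0:ℝ) (Ioi 0)) (nhds 0) :=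
    tendsto_id.mono_left nhdsWithin_le_nhds
  have hterm2 : Tendsto (fun b : ℝ => u * C * (b*b) * (2 * (-Real.log b))⁻¹)
      (nhdsWithin (0:ℝ) (Ioi 0)) (nhds 0) := by
    have h1 : Tendsto (fun b : ℝ => (2 * (-Real.log b))⁻¹)
        (nhdsWithin (0:ℝ) (Ioi 0)) (nhds 0) :=
      (htop.const_mul_atTop two_pos).inv_tendsto_atTop
    have h2 := (((hb0'.mul hb0').const_mul (u * C)).mul h1)
    simpa using h2
  have hterm3 : Tendsto (fun b : ℝ => C * (-Real.log b) ^ (-(1:ℝ)/2))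
      (nhdsWithin (0:ℝ) (Ioi 0)) (nhds 0) := by
    have h1 : Tendsto (fun x : ℝ => x ^ (-((1:ℝ)/2))) atTop (nhds 0) :=
      tendsto_rpow_neg_atTop (by norm_num)
    have h2 := (h1.comp htop).const_mul C
    rw [mul_zero] at h2
    refine h2.congr (fun b => ?_)
    norm_num
  have hA_tendsto : Tendsto A (nhdsWithin (0:ℝ) (Ioi 0)) (nhds (u * K)) := by
    have h1 : Tendsto (fun b : ℝ => u * K * (1 - b)
        - u * C * (b*b) * (2 * (-Real.log b))⁻¹ - C * (-Real.log b) ^ (-(1:ℝ)/2))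
        (nhdsWithin (0:ℝ) (Ioi 0)) (nhds (u * K * (1 - 0) - 0 - 0)) :=
      (((tendsto_const_nhds.sub hb0').const_mul (u*K)).sub hterm2).sub hterm3
    have h2 : u * K * (1 - 0) - 0 - 0 = u * K := by ring
    rw [h2] at h1
    refine h1.congr' ?_
    filter_upwards [Ioo_mem_nhdsGT_of_mem (show (0:ℝ) ∈ Ico (0:ℝ) 1 by constructor <;> norm_num)]
      with b hb
    exact (hAeq b hb).symm
  have hev1 : ∀ᶠ b in nhdsWithin (0:ℝ) (Ioi 0), 0 < A b :=
    hA_tendsto.eventually (eventually_gt_nhds (by positivity))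
  have hev2 : ∀ᶠ b in nhdsWithin (0:ℝ) (Ioi 0), b ∈ Ioo (0:ℝ) μb :=
    eventually_of_mem (Ioo_mem_nhdsGT_of_mem ⟨le_rfl, hμb0⟩) (fun b hb => hb)
  obtain ⟨b, hAb, hbmem⟩ := (hev1.and hev2).exists
  have hb0 := hbmem.1
  have hb1 : b < 1 := hbmem.2.trans hμb1
  have hΦpos : 0 < Φ b := by
    have hlb : Real.log b < 0 := Real.log_neg hb0 hb1
    have hr : (0:ℝ) < (-Real.log b) ^ ((1:ℝ)/2) := Real.rpow_pos_of_pos (by linarith) _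
    rw [hA_def] at hAb
    simp only at hAb
    by_contra hle
    push_neg at hle
    have := mul_nonpos_of_nonpos_of_nonneg hle hr.le
    linarith
  refine ⟨b*b, b, by positivity, by nlinarith, hbmem.2, ?_⟩
  rw [hΦ_def] at hΦpos; simp only at hΦpos; linarith

lemma measurable_rpow_const_fun (p : ℝ) : Measurable fun x : ℝ => x ^ p := by measurability

lemma measurable_abs_log_rpow : Measurable fun x : ℝ => x * |Real.log x| ^ (-(1:ℝ)/2) := by
  measurability

set_option maxHeartbeats 1000000 in
/-- the key derivative-comparison lemma (nonstandard adaptation of Struwe's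
monotonicity trick). If `c` is non-increasing on `(0,μ**)` and squeezed between
`(1/N)S^{N/2}μ^{1-N/2}` and `g(μ) = (1/N)S^{N/2}μ^{1-N/2} + h(μ)`, with `g` non-increasing,
then there is a measurable set `S₀ ⊆ (0,μ**)` of positive measure in every `(0,μ)`, on which
`c` is differentiable with `-c'(μ) ≤ (1+δ(μ))·(-g'(μ))`. -/
theorem statement12 (N : ℕ) (hN : 3 ≤ N) (S C : ℝ) (hS : 0 < S) (hC : 0 < C)
    (h₀ δ₀ : ℝ)
    (hN3 : N = 3 → 0 ≤ h₀ ∧ 0 < δ₀ ∧ h₀ < (1 / 3) * S ^ ((3 : ℝ) / 2) * δ₀)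
    (h δf g : ℝ → ℝ)
    (hh : ∀ μ, h μ = if 5 ≤ N then C * μ ^ (((N : ℝ) - 2) * ((N : ℝ) - 4) / 4)
      else if N = 4 then C / |Real.log μ|
      else h₀ + C * μ ^ ((1 : ℝ) / 2))
    (hδ : ∀ μ, δf μ = if 5 ≤ N then μ ^ (((N : ℝ) - 1) / 2)
      else if N = 4 then μ * |Real.log μ| ^ (-(1 : ℝ) / 2)
      else δ₀ * μ ^ ((1 : ℝ) / 2))
    (hg : ∀ μ, g μ = (1 / N : ℝ) * S ^ ((N : ℝ) / 2) * μ ^ (1 - (N : ℝ) / 2) + h μ)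
    (μstar : ℝ) (hμstar : μstar ∈ Ioo (0 : ℝ) 1)
    (hgmono : AntitoneOn g (Ioo 0 μstar))
    (c : ℝ → ℝ) (hcmono : AntitoneOn c (Ioo 0 μstar))
    (hclb : ∀ μ ∈ Ioo (0 : ℝ) μstar,
      (1 / N : ℝ) * S ^ ((N : ℝ) / 2) * μ ^ (1 - (N : ℝ) / 2) ≤ c μ)
    (hcub : ∀ μ ∈ Ioo (0 : ℝ) μstar, c μ ≤ g μ) :
    ∃ S₀ : Set ℝ, MeasurableSet S₀ ∧ S₀ ⊆ Ioo 0 μstar ∧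
      (∀ μ ∈ Ioo (0 : ℝ) μstar, 0 < volume (S₀ ∩ Ioo 0 μ)) ∧
      (∀ μ ∈ S₀, ∃ c' g' : ℝ, HasDerivAt c c' μ ∧ HasDerivAt g g' μ ∧
        -c' ≤ (1 + δf μ) * (-g')) := by
  obtain ⟨hμ0, hμ1⟩ := hμstar
  have hsql : ∀ μ ∈ Ioo (0:ℝ) μstar, g μ - h μ ≤ c μ := by
    intro μ hμ
    have h1 := hclb μ hμ
    rw [hg μ]
    linarith
  rcases le_or_gt 5 N with h5 | hlt
  · -- case N ≥ 5
    have hN5R : (5:ℝ) ≤ (N:ℝ) := by exact_mod_cast h5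
    have hN0 : (0:ℝ) < (N:ℝ) := by linarith
    set K : ℝ := (1 / N : ℝ) * S ^ ((N : ℝ) / 2) with hK_def
    have hK0 : 0 < K := by
      have := Real.rpow_pos_of_pos hS ((N:ℝ)/2)
      rw [hK_def]
      positivity
    set α : ℝ := ((N : ℝ) - 2) * ((N : ℝ) - 4) / 4 with hα_def
    set β : ℝ := ((N : ℝ) - 1) / 2 with hβ_def
    set γ : ℝ := 1 - (N : ℝ) / 2 with hγ_def
    have hhfun : h = fun x => C * x ^ α := funext fun x => by rw [hh x, if_pos h5]
    have hδfun : δf = fun x => x ^ β := funext fun x => by rw [hδ x, if_pos h5]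
    have hgfun : g = fun x => K * x ^ γ + C * x ^ α := funext fun x => by
      rw [hg x, hhfun]
    set G' : ℝ → ℝ := fun x => K * (γ * x ^ (γ-1)) + C * (α * x ^ (α-1)) with hG'_def
    have hg' : ∀ x ∈ Ioo (0:ℝ) μstar, HasDerivAt g (G' x) x := by
      intro x hx
      rw [hgfun]
      exact ((Real.hasDerivAt_rpow_const (Or.inl hx.1.ne')).const_mul K).add
        ((Real.hasDerivAt_rpow_const (Or.inl hx.1.ne')).const_mul C)
    have hG'c : ContinuousOn G' (Ioo 0 μstar) := by
      intro x hx
      refine ContinuousAt.continuousWithinAt ?_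
      have c1 : ContinuousAt (fun y:ℝ => y ^ (γ-1)) x :=
        Real.continuousAt_rpow_const x _ (Or.inl hx.1.ne')
      have c2 : ContinuousAt (fun y:ℝ => y ^ (α-1)) x :=
        Real.continuousAt_rpow_const x _ (Or.inl hx.1.ne')
      exact (continuousAt_const.mul (continuousAt_const.mul c1)).add
        (continuousAt_const.mul (continuousAt_const.mul c2))
    refine struwe_core μstar hμ0 c g δf h G' hg' hG'c hgmono hcmono hsql hcub ?_ ?_ ?_ ?_
    · intro μ hμ; rw [hδfun]; exact Real.rpow_nonneg hμ.1.le β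
    · intro x hx y hy hxy
      rw [hδfun]
      exact Real.rpow_le_rpow hx.1.le hxy (by rw [hβ_def]; linarith)
    · rw [hδfun]; exact measurable_rpow_const_fun β
    · intro μb hμb
      obtain ⟨m, b, h1, h2, h3, h4⟩ := viol5 K C α β γ hK0 hC
        (by rw [hα_def]; nlinarith) (by rw [hβ_def]; linarith)
        (by rw [hβ_def, hγ_def]; ring) μb hμb.1
      exact ⟨m, b, h1, h2, h3, by rw [hhfun, hδfun, hgfun]; exact h4⟩
  · interval_cases N
    · -- case N = 3
      obtain ⟨hh₀, hδ₀, hlt3⟩ := hN3 rfl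
      set K : ℝ := (1 / ((3:ℕ):ℝ)) * S ^ (((3:ℕ):ℝ) / 2) with hK_def
      have hK0 : 0 < K := by
        have := Real.rpow_pos_of_pos hS (((3:ℕ):ℝ)/2)
        rw [hK_def]
        positivity
      have hKval : h₀ < K * δ₀ := by
        refine lt_of_lt_of_eq hlt3 ?_
        rw [hK_def]
        norm_num
      have hhfun : h = fun x => h₀ + C * x ^ ((1:ℝ)/2) := funext fun x => by
        rw [hh x, if_neg (by norm_num), if_neg (by norm_num)]
      have hδfun : δf = fun x => δ₀ * x ^ ((1:ℝ)/2) := funext fun x => by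
        rw [hδ x, if_neg (by norm_num), if_neg (by norm_num)]
      have hexp : (1 - ((3:ℕ):ℝ) / 2) = (-(1/2):ℝ) := by norm_num
      have hgfun : g = fun x => K * x ^ (-(1/2):ℝ) + (h₀ + C * x ^ ((1:ℝ)/2)) :=
        funext fun x => by rw [hg x, hhfun, hexp, hK_def]
      set G' : ℝ → ℝ := fun x =>
        K * ((-(1/2):ℝ) * x ^ ((-(1/2):ℝ)-1)) + C * (((1:ℝ)/2) * x ^ ((1:ℝ)/2-1)) with hG'_def
      have hg' : ∀ x ∈ Ioo (0:ℝ) μstar, HasDerivAt g (G' x) x := by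
        intro x hx
        rw [hgfun]
        exact ((Real.hasDerivAt_rpow_const (Or.inl hx.1.ne')).const_mul K).add
          (((Real.hasDerivAt_rpow_const (Or.inl hx.1.ne')).const_mul C).const_add h₀)
      have hG'c : ContinuousOn G' (Ioo 0 μstar) := by
        intro x hx
        refine ContinuousAt.continuousWithinAt ?_
        have c1 : ContinuousAt (fun y:ℝ => y ^ ((-(1/2):ℝ)-1)) x :=
          Real.continuousAt_rpow_const x _ (Or.inl hx.1.ne')
        have c2 : ContinuousAt (fun y:ℝ => y ^ ((1:ℝ)/2-1)) x :=
          Real.continuousAt_rpow_const x _ (Or.inl hx.1.ne')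
        exact (continuousAt_const.mul (continuousAt_const.mul c1)).add
          (continuousAt_const.mul (continuousAt_const.mul c2))
      refine struwe_core μstar hμ0 c g δf h G' hg' hG'c hgmono hcmono hsql hcub ?_ ?_ ?_ ?_
      · intro μ hμ
        rw [hδfun]
        exact mul_nonneg hδ₀.le (Real.rpow_nonneg hμ.1.le _)
      · intro x hx y hy hxy
        rw [hδfun]
        exact mul_le_mul_of_nonneg_left (Real.rpow_le_rpow hx.1.le hxy (by norm_num)) hδ₀.le
      · rw [hδfun]; exact (measurable_rpow_const_fun ((1:ℝ)/2)).const_mul δ₀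
      · intro μb hμb
        obtain ⟨m, b, h1, h2, h3, h4⟩ := viol3 K C h₀ δ₀ hK0 hC hh₀ hδ₀ hKval μb hμb.1
        exact ⟨m, b, h1, h2, h3, by rw [hhfun, hδfun, hgfun]; exact h4⟩
    · -- case N = 4
      set K : ℝ := (1 / ((4:ℕ):ℝ)) * S ^ (((4:ℕ):ℝ) / 2) with hK_def
      have hK0 : 0 < K := by
        have := Real.rpow_pos_of_pos hS (((4:ℕ):ℝ)/2)
        rw [hK_def]
        positivity
      have hhfun : h = fun x => C / |Real.log x| := funext fun x => by
        rw [hh x, if_neg (by norm_num), if_pos rfl]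
      have hδfun : δf = fun x => x * |Real.log x| ^ (-(1:ℝ)/2) := funext fun x => by
        rw [hδ x, if_neg (by norm_num), if_pos rfl]
      have hexp : (1 - ((4:ℕ):ℝ) / 2) = (-1:ℝ) := by norm_num
      have hgfun : g = fun x => K * x ^ (-1:ℝ) + C / |Real.log x| :=
        funext fun x => by rw [hg x, hhfun, hexp, hK_def]
      set G' : ℝ → ℝ := fun x =>
        K * ((-1:ℝ) * x ^ ((-1:ℝ)-1)) + C * (x⁻¹ / Real.log x ^ 2) with hG'_def
      have hg' : ∀ x ∈ Ioo (0:ℝ) μstar, HasDerivAt g (G' x) x := by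
        intro x hx
        have hx1 : x < 1 := hx.2.trans hμ1
        have hlx : Real.log x < 0 := Real.log_neg hx.1 hx1
        have hev : g =ᶠ[nhds x] fun y => K * y ^ (-1:ℝ) + -C * (Real.log y)⁻¹ := by
          filter_upwards [isOpen_Ioo.mem_nhds (⟨hx.1, hx1⟩ : x ∈ Ioo (0:ℝ) 1)] with y hy
          rw [hgfun]
          simp only
          rw [abs_of_neg (Real.log_neg hy.1 hy.2), div_neg, div_eq_mul_inv]
          ring
        have hd : HasDerivAt (fun y => K * y ^ (-1:ℝ) + -C * (Real.log y)⁻¹)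
            (K * ((-1:ℝ) * x ^ ((-1:ℝ)-1)) + -C * (-(x⁻¹) / Real.log x ^ 2)) x :=
          ((Real.hasDerivAt_rpow_const (Or.inl hx.1.ne')).const_mul K).add
            (((Real.hasDerivAt_log hx.1.ne').inv hlx.ne).const_mul (-C))
        have hd2 : HasDerivAt g (K * ((-1:ℝ) * x ^ ((-1:ℝ)-1)) + -C * (-(x⁻¹) / Real.log x ^ 2)) x :=
          hd.congr_of_eventuallyEq hev
        convert hd2 using 1
        rw [hG'_def]
        ring
      have hG'c : ContinuousOn G' (Ioo 0 μstar) := by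
        intro x hx
        have hx1 : x < 1 := hx.2.trans hμ1
        have hlx : Real.log x < 0 := Real.log_neg hx.1 hx1
        refine ContinuousAt.continuousWithinAt ?_
        have c1 : ContinuousAt (fun y:ℝ => y ^ ((-1:ℝ)-1)) x :=
          Real.continuousAt_rpow_const x _ (Or.inl hx.1.ne')
        have c2 : ContinuousAt (fun y:ℝ => y⁻¹ / Real.log y ^ 2) x := by
          refine ContinuousAt.div (continuousAt_inv₀ hx.1.ne')
            ((Real.continuousAt_log hx.1.ne').pow 2) (pow_ne_zero 2 hlx.ne)
        exact (continuousAt_const.mul (continuousAt_const.mul c1)).add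
          (continuousAt_const.mul c2)
      refine struwe_core μstar hμ0 c g δf h G' hg' hG'c hgmono hcmono hsql hcub ?_ ?_ ?_ ?_
      · intro μ hμ
        rw [hδfun]
        exact mul_nonneg hμ.1.le (Real.rpow_nonneg (abs_nonneg _) _)
      · intro x hx y hy hxy
        rw [hδfun]
        have hy1 : y < 1 := hy.2.trans hμ1
        have hly : Real.log y < 0 := Real.log_neg hy.1 hy1
        have hlx : Real.log x < 0 := Real.log_neg hx.1 (hx.2.trans hμ1)
        have habs : |Real.log y| ≤ |Real.log x| := by
          rw [abs_of_neg hly, abs_of_neg hlx]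
          have := Real.log_le_log hx.1 hxy
          linarith
        refine mul_le_mul hxy ?_ (Real.rpow_nonneg (abs_nonneg _) _) hy.1.le
        exact Real.rpow_le_rpow_of_nonpos (abs_pos.2 hly.ne) habs (by norm_num)
      · rw [hδfun]; exact measurable_abs_log_rpow
      · intro μb hμb
        obtain ⟨m, b, h1, h2, h3, h4⟩ := viol4 K C hK0 hC μb hμb.1 (hμb.2.trans hμ1)
        exact ⟨m, b, h1, h2, h3, by rw [hhfun, hδfun, hgfun]; exact h4⟩
end
end

section
/- Let N ≥ 3, 2* = 2N/(N−2), S > 0 and μ > 0, and set ᾱ = S^{N/2}·μ^{1−N/2}. Let P, Q : [0,1] → [0, ∞) be continuous functions such that S·Q(t) ≤ P(t) for every t ∈ [0,1] and P(0) < ᾱ < P(1). Then max_{t ∈ [0,1]} [ (1/2)·P(t) − (μ/2*)·Q(t)^{2*/2} ] ≥ (1/N)·S^{N/2}·μ^{1−N/2}. -/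
open Set

noncomputable section

/-- abstract lower bound for the mountain pass level. If `S·Q ≤ P` on `[0,1]`
(Sobolev inequality along a path of normalized functions) and `P` crosses the level
`ᾱ = S^{N/2}μ^{1-N/2}`, then the maximum of `(1/2)P(t) - (μ/2*)Q(t)^{2*/2}` is at least
`(1/N)S^{N/2}μ^{1-N/2}`. -/
theorem statement14 (N : ℕ) (hN : 3 ≤ N) (S μ : ℝ) (hS : 0 < S) (hμ : 0 < μ)
    (P Q : ℝ → ℝ) (hP : ContinuousOn P (Icc 0 1)) (hQ : ContinuousOn Q (Icc 0 1))
    (hPnn : ∀ t ∈ Icc (0 : ℝ) 1, 0 ≤ P t) (hQnn : ∀ t ∈ Icc (0 : ℝ) 1, 0 ≤ Q t)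
    (hSob : ∀ t ∈ Icc (0 : ℝ) 1, S * Q t ≤ P t)
    (h0 : P 0 < S ^ ((N : ℝ) / 2) * μ ^ (1 - (N : ℝ) / 2))
    (h1 : S ^ ((N : ℝ) / 2) * μ ^ (1 - (N : ℝ) / 2) < P 1) :
    ∃ t ∈ Icc (0 : ℝ) 1,
      (1 / N : ℝ) * S ^ ((N : ℝ) / 2) * μ ^ (1 - (N : ℝ) / 2)
        ≤ (1 / 2) * P t - (μ / critExp N) * Q t ^ (critExp N / 2) := by
  set c : ℝ := (N : ℝ) with hc
  have hc3 : (3 : ℝ) ≤ c := by rw [hc]; exact_mod_cast hN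
  have hc2 : (0 : ℝ) < c - 2 := by linarith
  have hc0 : (0 : ℝ) < c := by linarith
  set α : ℝ := S ^ (c / 2) * μ ^ (1 - c / 2) with hαdef
  have hα : 0 < α := mul_pos (Real.rpow_pos_of_pos hS _) (Real.rpow_pos_of_pos hμ _)
  -- crossing point via IVT
  have hIVT := intermediate_value_Icc (by norm_num : (0:ℝ) ≤ 1) hP
  have hmem : α ∈ Icc (P 0) (P 1) := ⟨h0.le, h1.le⟩
  obtain ⟨t, ht, hPt⟩ := hIVT hmem
  refine ⟨t, ht, ?_⟩
  set e : ℝ := critExp N / 2 with he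
  have hee : e = c / (c - 2) := by
    simp [he, critExp, hc]; ring
  have he0 : 0 ≤ e := by rw [hee]; positivity
  have hcrit : critExp N = 2 * c / (c - 2) := rfl
  have hcritpos : 0 < critExp N := by rw [hcrit]; positivity
  -- Q t ≤ α / S
  have hQt : Q t ≤ α / S := by
    rw [le_div_iff₀ hS, mul_comm]
    exact (hSob t ht).trans hPt.le
  have hQb : Q t ^ e ≤ (α / S) ^ e := Real.rpow_le_rpow (hQnn t ht) hQt he0
  -- compute (α/S)^e
  have hAS : α / S = S ^ (c / 2 - 1) * μ ^ (1 - c / 2) := by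
    rw [Real.rpow_sub hS, Real.rpow_one]; ring
  have hE : (α / S) ^ e = S ^ (c / 2) * μ ^ (-(c / 2)) := by
    rw [hAS, Real.mul_rpow (Real.rpow_nonneg hS.le _) (Real.rpow_nonneg hμ.le _),
      ← Real.rpow_mul hS.le, ← Real.rpow_mul hμ.le]
    congr 1
    · congr 1
      rw [hee]; field_simp
    · congr 1
      rw [hee]; field_simp; ring
  have hμsplit : μ ^ (1 - c / 2) = μ * μ ^ (-(c / 2)) := by
    rw [show (1 - c / 2) = 1 + (-(c / 2)) by ring, Real.rpow_add hμ, Real.rpow_one]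
  -- final algebra
  have hkey : (1 / 2) * α - (μ / critExp N) * ((α / S) ^ e) = (1 / c) * α := by
    rw [hE, hαdef, hμsplit, hcrit]
    field_simp
    ring
  have hmono : (μ / critExp N) * Q t ^ e ≤ (μ / critExp N) * ((α / S) ^ e) := by
    apply mul_le_mul_of_nonneg_left hQb
    positivity
  have : (1 / c) * α ≤ (1 / 2) * P t - (μ / critExp N) * Q t ^ e := by
    rw [← hkey, hPt]; linarith
  calc (1 / (N:ℝ)) * S ^ ((N : ℝ) / 2) * μ ^ (1 - (N : ℝ) / 2) = (1 / c) * α := by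
        rw [hαdef, hc]; ring
    _ ≤ _ := this
end
end
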